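/- Let M be a compact metric space, let φ and ψ be flows on M, and let p ∈ M be a fixed point of both flows (φ_t(p) = p = ψ_t(p) for all t). Let θ : (M∖{p}) × ℝ → ℝ be a continuous function such that: (i) θ(x,0) = 0 and t ↦ θ(x,t) is strictly increasing for every x ≠ p; (ii) θ(x, s+t) = θ(x,s) + θ(φ_s(x), t) for all x ≠ p and s,t ∈ ℝ; (iii) ψ(x, θ(x,t)) = φ_t(x) for all x ≠ p and t ∈ ℝ; (iv) liminf_{t→+∞} θ(x,t)/t ≥ 1 for every x ≠ p. Assume further: (v) for every δ₂ > 0 there exists δ₁ ∈ (0,δ₂) such that for every x in the closed ball of radius δ₁ around p and every s ∈ [0,2], ψ_s(x) lies in the open ball of radius δ₂ around p; and (vi) for every x ∈ M, lim_{δ→0} liminf_{t→+∞} (1/t)∫₀ᵗ χ_{B(p,δ)}(φ_s(x)) ds = 1. Then for every x ∈ M, lim_{δ→0} liminf_{t→+∞} (1/t)∫₀ᵗ χ_{B(p,δ)}(ψ_s(x)) ds = 1; that is, {p} is an attracting center for ψ as well. -/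

import Mathlib

open MeasureTheory Filter Set

private lemma finite_of_separated {A : Set ℝ} {h₀ t : ℝ} (h₀pos : 0 < h₀)
    (hsub : A ⊆ Set.Icc 0 t) (hsep : ∀ a ∈ A, ∀ b ∈ A, a < b → a + h₀ ≤ b) :
    A.Finite := by
  have key : ∀ a ∈ A, ∀ b ∈ A, a < b → ⌊a / h₀⌋ < ⌊b / h₀⌋ := by
    intro a ha b hb hab
    have h1 : a + h₀ ≤ b := hsep a ha b hb hab
    have h2 : a / h₀ + 1 ≤ b / h₀ := by
      rw [div_add' _ _ _ (ne_of_gt h₀pos)]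
      gcongr
      linarith
    calc ⌊a / h₀⌋ < ⌊a / h₀⌋ + 1 := by omega
      _ = ⌊a / h₀ + 1⌋ := by rw [Int.floor_add_one]
      _ ≤ ⌊b / h₀⌋ := Int.floor_le_floor h2
  have hinj : Set.InjOn (fun a => ⌊a / h₀⌋) A := by
    intro a ha b hb hab
    by_contra hne
    rcases lt_or_gt_of_ne hne with h | h
    · exact absurd hab (ne_of_lt (key a ha b hb h))
    · exact absurd hab.symm (ne_of_lt (key b hb a ha h))
  refine Set.Finite.of_finite_image ?_ hinj
  refine Set.Finite.subset (Set.finite_Icc (0 : ℤ) ⌊t / h₀⌋) ?_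
  rintro _ ⟨a, ha, rfl⟩
  have h0a := (hsub ha).1
  have hta := (hsub ha).2
  refine ⟨Int.floor_nonneg.mpr (by positivity), Int.floor_le_floor (by gcongr)⟩

private lemma density_eq_measure {M : Type*} [MetricSpace M] {f : ℝ → M} (hf : Continuous f)
    {A : Set M} (hA : IsOpen A) {T : ℝ} (hT : 0 ≤ T) :
    ∫ s in (0:ℝ)..T, A.indicator (fun _ => (1:ℝ)) (f s)
      = (volume (f ⁻¹' A ∩ Set.Ioc 0 T)).toReal := by
  rw [intervalIntegral.integral_of_le hT]
  have h1 : ∀ s : ℝ, A.indicator (fun _ => (1:ℝ)) (f s)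
      = (f ⁻¹' A).indicator (fun _ => (1:ℝ)) s := by
    intro s
    by_cases h : f s ∈ A
    · simp [h, Set.indicator_of_mem, Set.mem_preimage]
    · simp [h, Set.mem_preimage]
  simp_rw [h1]
  rw [MeasureTheory.integral_indicator (hA.preimage hf).measurableSet,
    MeasureTheory.Measure.restrict_restrict (hA.preimage hf).measurableSet,
    MeasureTheory.setIntegral_const]
  simp
  rfl

theorem attracting_center_of_time_change
    {M : Type*} [MetricSpace M] [CompactSpace M]
    (φ ψ : ℝ → M → M)
    (hφcont : Continuous fun q : M × ℝ => φ q.2 q.1)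
    (hφ0 : ∀ x, φ 0 x = x)
    (hφadd : ∀ s t : ℝ, ∀ x, φ t (φ s x) = φ (s + t) x)
    (hψcont : Continuous fun q : M × ℝ => ψ q.2 q.1)
    (hψ0 : ∀ x, ψ 0 x = x)
    (hψadd : ∀ s t : ℝ, ∀ x, ψ t (ψ s x) = ψ (s + t) x)
    (p : M) (hφp : ∀ t : ℝ, φ t p = p) (hψp : ∀ t : ℝ, ψ t p = p)
    (θ : M → ℝ → ℝ)
    (hθcont : ContinuousOn (fun q : M × ℝ => θ q.1 q.2) {q : M × ℝ | q.1 ≠ p})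
    (hθ0 : ∀ x : M, x ≠ p → θ x 0 = 0)
    (hθmono : ∀ x : M, x ≠ p → StrictMono (θ x))
    (hθcocycle : ∀ x : M, x ≠ p → ∀ s t : ℝ, θ x (s + t) = θ x s + θ (φ s x) t)
    (hθtransfer : ∀ x : M, x ≠ p → ∀ t : ℝ, ψ (θ x t) x = φ t x)
    (hθgrowth : ∀ x : M, x ≠ p →
      1 ≤ Filter.liminf (fun t : ℝ => θ x t / t) Filter.atTop)
    (hψnear : ∀ δ₂ > (0 : ℝ), ∃ δ₁ ∈ Set.Ioo (0 : ℝ) δ₂,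
      ∀ x ∈ Metric.closedBall p δ₁, ∀ s ∈ Set.Icc (0 : ℝ) 2,
        ψ s x ∈ Metric.ball p δ₂)
    (hφattract : ∀ x : M,
      Filter.Tendsto
        (fun δ : ℝ => Filter.liminf
          (fun t : ℝ => (1 / t) *
            ∫ s in (0 : ℝ)..t, (Metric.ball p δ).indicator (fun _ => (1 : ℝ)) (φ s x))
          Filter.atTop)
        (nhdsWithin 0 (Set.Ioi 0)) (nhds 1)) :
    ∀ x : M,
      Filter.Tendsto
        (fun δ : ℝ => Filter.liminf
          (fun t : ℝ => (1 / t) *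
            ∫ s in (0 : ℝ)..t, (Metric.ball p δ).indicator (fun _ => (1 : ℝ)) (ψ s x))
          Filter.atTop)
        (nhdsWithin 0 (Set.Ioi 0)) (nhds 1) := by
  intro x
  have hψx : Continuous fun s : ℝ => ψ s x :=
    hψcont.comp (continuous_const.prodMk continuous_id)
  have hφx : Continuous fun s : ℝ => φ s x :=
    hφcont.comp (continuous_const.prodMk continuous_id)
  suffices key : ∀ δ₂ : ℝ, 0 < δ₂ →
      Filter.liminf (fun t : ℝ => (1 / t) *
        ∫ s in (0 : ℝ)..t, (Metric.ball p δ₂).indicator (fun _ => (1 : ℝ)) (ψ s x))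
        Filter.atTop = 1 by
    refine Filter.Tendsto.congr' ?_ tendsto_const_nhds
    filter_upwards [self_mem_nhdsWithin] with δ hδ
    exact (key δ hδ).symm
  intro δ₂ hδ₂
  set u : ℝ → ℝ := fun t => (1 / t) *
    ∫ s in (0:ℝ)..t, (Metric.ball p δ₂).indicator (fun _ => (1:ℝ)) (ψ s x) with hu
  have hudens : ∀ t : ℝ, 0 ≤ t →
      u t = (1/t) * (volume ((fun s => ψ s x) ⁻¹' Metric.ball p δ₂ ∩ Set.Ioc 0 t)).toReal := by
    intro t ht
    rw [hu]
    simp only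
    rw [density_eq_measure hψx Metric.isOpen_ball ht]
  -- upper and lower eventual bounds
  have hub : ∀ᶠ t in Filter.atTop, u t ≤ 1 := by
    filter_upwards [Filter.eventually_ge_atTop 1] with t ht
    rw [hudens t (by linarith)]
    have h1 : volume ((fun s => ψ s x) ⁻¹' Metric.ball p δ₂ ∩ Set.Ioc 0 t)
        ≤ ENNReal.ofReal t := by
      refine le_trans (measure_mono inter_subset_right) ?_
      rw [Real.volume_Ioc, sub_zero]
    have h2 : (volume ((fun s => ψ s x) ⁻¹' Metric.ball p δ₂ ∩ Set.Ioc 0 t)).toReal ≤ t :=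
      ENNReal.toReal_le_of_le_ofReal (by linarith) h1
    have ht0 : (0:ℝ) < t := by linarith
    calc (1/t) * (volume ((fun s => ψ s x) ⁻¹' Metric.ball p δ₂ ∩ Set.Ioc 0 t)).toReal
        ≤ (1/t) * t := by gcongr
      _ = 1 := by field_simp
  have hlb : ∀ᶠ t in Filter.atTop, 0 ≤ u t := by
    filter_upwards [Filter.eventually_ge_atTop 1] with t ht
    rw [hudens t (by linarith)]
    have : (0:ℝ) ≤ 1/t := by positivity
    positivity
  have hbdd : Filter.IsBoundedUnder (· ≥ ·) Filter.atTop u :=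
    ⟨0, by simpa only [Filter.eventually_map] using hlb⟩
  have hco : Filter.IsCoboundedUnder (· ≥ ·) Filter.atTop u :=
    Filter.isCoboundedUnder_ge_of_eventually_le _ hub
  refine le_antisymm (Filter.liminf_le_of_frequently_le hub.frequently hbdd) ?_
  -- the main lower bound
  refine le_of_forall_pos_le_add ?_
  intro ε' hε'
  suffices hmain : ∀ᶠ T in Filter.atTop, 1 - ε' ≤ u T by
    have := Filter.le_liminf_of_le hco hmain
    linarith
  by_cases hx : x = p
  · -- trivial case: x = p, the orbit is constantly p
    filter_upwards [Filter.eventually_ge_atTop 1] with T hT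
    have hT0 : (0:ℝ) < T := by linarith
    have hpre : (fun s => ψ s x) ⁻¹' Metric.ball p δ₂ = Set.univ := by
      ext s
      simp [hx, hψp s, Metric.mem_ball, hδ₂]
    rw [hudens T hT0.le, hpre, Set.univ_inter, Real.volume_Ioc, sub_zero,
      ENNReal.toReal_ofReal hT0.le]
    rw [one_div, inv_mul_cancel₀ (ne_of_gt hT0)]
    linarith
  -- main case : x ≠ p
  obtain ⟨δ₁, ⟨hδ₁0, hδ₁₂⟩, hδ₁ball⟩ := hψnear δ₂ hδ₂
  set K : Set M := {y | δ₁ ≤ dist y p} with hK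
  have hKclosed : IsClosed K := isClosed_le continuous_const (continuous_id.dist continuous_const)
  have hKp : ∀ y ∈ K, y ≠ p := by
    intro y hy hyp
    rw [hK] at hy
    simp only [Set.mem_setOf_eq, hyp, dist_self] at hy
    linarith
  -- uniform small-time bound for θ on K
  obtain ⟨h₀, hh₀pos, hh₀le1, hh₀⟩ :
      ∃ h₀ : ℝ, 0 < h₀ ∧ h₀ ≤ 1 ∧ ∀ y ∈ K, ∀ h : ℝ, 0 ≤ h → h ≤ h₀ → θ y h ≤ 1 := by
    have hKcompact : IsCompact K := hKclosed.isCompact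
    have hC : IsCompact (K ×ˢ Set.Icc (0:ℝ) 1) := hKcompact.prod isCompact_Icc
    have hsub : K ×ˢ Set.Icc (0:ℝ) 1 ⊆ {q : M × ℝ | q.1 ≠ p} := fun q hq => hKp _ hq.1
    have hucont : UniformContinuousOn (fun q : M × ℝ => θ q.1 q.2) (K ×ˢ Set.Icc (0:ℝ) 1) :=
      hC.uniformContinuousOn_of_continuous (hθcont.mono hsub)
    rw [Metric.uniformContinuousOn_iff] at hucont
    obtain ⟨d, hd, hd'⟩ := hucont 1 one_pos
    refine ⟨min 1 (d/2), lt_min one_pos (by positivity), min_le_left _ _, ?_⟩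
    intro y hy h hh0 hhle
    have h1 : ((y, h) : M × ℝ) ∈ K ×ˢ Set.Icc (0:ℝ) 1 :=
      ⟨hy, hh0, hhle.trans (min_le_left _ _)⟩
    have h2 : ((y, (0:ℝ)) : M × ℝ) ∈ K ×ˢ Set.Icc (0:ℝ) 1 := ⟨hy, le_refl _, zero_le_one⟩
    have hdist : dist ((y, h) : M × ℝ) (y, 0) < d := by
      rw [Prod.dist_eq]
      simp only [dist_self, Real.dist_eq, sub_zero, abs_of_nonneg hh0]
      have : h ≤ d/2 := hhle.trans (min_le_right _ _)
      rw [max_eq_right hh0]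
      linarith
    have hlt := hd' _ h1 _ h2 hdist
    rw [Real.dist_eq, hθ0 y (hKp y hy), sub_zero] at hlt
    exact le_of_lt (lt_of_le_of_lt (le_abs_self _) hlt)
  -- the time change τ
  set τ : ℝ → ℝ := θ x with hτdef
  have hτmono : StrictMono τ := hθmono x hx
  have hτ0 : τ 0 = 0 := hθ0 x hx
  have hτc : Continuous τ := by
    rw [continuous_iff_continuousAt]
    intro t
    have hopen : IsOpen {q : M × ℝ | q.1 ≠ p} :=
      (isOpen_compl_singleton (x := p)).preimage continuous_fst
    have hca : ContinuousAt (fun q : M × ℝ => θ q.1 q.2) (x, t) :=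
      hθcont.continuousAt (hopen.mem_nhds hx)
    exact hca.comp ((continuous_const.prodMk continuous_id).continuousAt)
  have hcocy : ∀ s h : ℝ, τ (s + h) = τ s + θ (φ s x) h := hθcocycle x hx
  have htransfer : ∀ t : ℝ, ψ (τ t) x = φ t x := hθtransfer x hx
  -- the chunking bound
  have chunk : ∀ a v : ℝ, a < v → (∀ w, a < w → w ≤ v → δ₁ ≤ dist (φ w x) p) →
      τ v - τ a ≤ (v - a) / h₀ + 1 := by
    intro a v hav hKin
    have step : ∀ n : ℕ, ∀ w, a < w → w ≤ v → v - w ≤ n * h₀ → τ v - τ w ≤ n := by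
      intro n
      induction n with
      | zero =>
        intro w h1 h2 h3
        simp only [Nat.cast_zero, zero_mul] at h3 ⊢
        have : w = v := le_antisymm h2 (by linarith)
        rw [this]
        simp
      | succ n ih =>
        intro w h1 h2 h3
        by_cases hc : v - w ≤ h₀
        · have hvw : τ v = τ w + θ (φ w x) (v - w) := by
            have h := hcocy w (v - w)
            rw [add_sub_cancel] at h
            exact h
          have hb : θ (φ w x) (v - w) ≤ 1 := hh₀ _ (hKin w h1 h2) _ (by linarith) hc
          rw [hvw]
          push_cast
          linarith
        · push_neg at hc
          have h1' : a < w + h₀ := by linarith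
          have h2' : w + h₀ ≤ v := by linarith
          have h3' : v - (w + h₀) ≤ n * h₀ := by push_cast at h3 ⊢; linarith
          have ihw := ih (w + h₀) h1' h2' h3'
          have hvw : τ (w + h₀) = τ w + θ (φ w x) h₀ := hcocy w h₀
          have hb : θ (φ w x) h₀ ≤ 1 := hh₀ _ (hKin w h1 h2) _ hh₀pos.le le_rfl
          push_cast at ihw ⊢
          rw [hvw] at ihw
          linarith
    have hn : ∀ w, a < w → w ≤ v → τ v - τ w ≤ (⌈(v - a) / h₀⌉₊ : ℝ) := by
      intro w h1 h2
      refine step _ w h1 h2 ?_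
      have hle : (v - a) / h₀ ≤ (⌈(v - a) / h₀⌉₊ : ℝ) := Nat.le_ceil _
      rw [div_le_iff₀ hh₀pos] at hle
      linarith
    have hlim : Filter.Tendsto (fun w => τ v - τ w) (nhdsWithin a (Set.Ioi a))
        (nhds (τ v - τ a)) :=
      ((continuous_const.sub hτc).tendsto a).mono_left nhdsWithin_le_nhds
    have hev : ∀ᶠ w in nhdsWithin a (Set.Ioi a), τ v - τ w ≤ (⌈(v - a) / h₀⌉₊ : ℝ) := by
      filter_upwards [Ioo_mem_nhdsGT_of_mem ⟨le_refl a, hav⟩] with w hw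
      exact hn w hw.1 hw.2.le
    have h1 : τ v - τ a ≤ (⌈(v - a) / h₀⌉₊ : ℝ) := le_of_tendsto hlim hev
    have h2 : (⌈(v - a) / h₀⌉₊ : ℝ) < (v - a) / h₀ + 1 :=
      Nat.ceil_lt_add_one (div_nonneg (by linarith) hh₀pos.le)
    linarith
  -- growth of τ
  have hgrow : ∀ᶠ t in Filter.atTop, t / 2 ≤ τ t := by
    have h1 : (1:ℝ)/2 < Filter.liminf (fun t : ℝ => τ t / t) Filter.atTop :=
      lt_of_lt_of_le (by norm_num) (hθgrowth x hx)
    have hb : Filter.IsBoundedUnder (· ≥ ·) Filter.atTop (fun t : ℝ => τ t / t) := by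
      refine ⟨0, ?_⟩
      rw [Filter.eventually_map]
      filter_upwards [Filter.eventually_ge_atTop 1] with t ht
      have h0 : 0 ≤ τ t := by
        rw [← hτ0]
        exact hτmono.monotone (by linarith)
      positivity
    filter_upwards [Filter.eventually_lt_of_lt_liminf h1 hb,
      Filter.eventually_gt_atTop 0] with t h2 h3
    rw [lt_div_iff₀ h3] at h2
    linarith
  have hτtop : Filter.Tendsto τ Filter.atTop Filter.atTop := by
    refine Filter.tendsto_atTop_mono' _ hgrow ?_
    exact Filter.Tendsto.atTop_div_const (by norm_num) Filter.tendsto_id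
  have hsurj : ∀ T : ℝ, 0 ≤ T → ∃ t : ℝ, 0 ≤ t ∧ τ t = T := by
    intro T hT
    obtain ⟨b, hb1, hb2⟩ := ((hτtop.eventually_ge_atTop T).and
      (Filter.eventually_ge_atTop 0)).exists
    have hmem : T ∈ Set.Icc (τ 0) (τ b) := by rw [hτ0]; exact ⟨hT, hb1⟩
    obtain ⟨t, ht, hteq⟩ := intermediate_value_Icc hb2 hτc.continuousOn hmem
    exact ⟨t, ht.1, hteq⟩
  -- choose ε depending on ε' and h₀
  set ε : ℝ := min (1/2) (h₀ * ε' / 8) with hεdef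
  have hεpos : 0 < ε := lt_min (by norm_num) (by positivity)
  have hεlt1 : ε < 1 := lt_of_le_of_lt (min_le_left _ _) (by norm_num)
  have hε8 : ε ≤ h₀ * ε' / 8 := min_le_right _ _
  -- choose δ ≤ δ₁ with φ-density liminf > 1 - ε
  obtain ⟨δ, hδlim, hδlt, hδpos⟩ : ∃ δ : ℝ,
      (1 - ε < Filter.liminf
        (fun t : ℝ => (1 / t) *
          ∫ s in (0 : ℝ)..t, (Metric.ball p δ).indicator (fun _ => (1 : ℝ)) (φ s x))
        Filter.atTop) ∧ δ < δ₁ ∧ δ ∈ Set.Ioi (0:ℝ) := by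
    have hev1 := (hφattract x).eventually (eventually_gt_nhds (by linarith : (1:ℝ) - ε < 1))
    have hev2 : ∀ᶠ δ in nhdsWithin (0:ℝ) (Set.Ioi 0), δ < δ₁ :=
      Filter.Eventually.filter_mono nhdsWithin_le_nhds (eventually_lt_nhds hδ₁0)
    exact ((hev1.and hev2).and self_mem_nhdsWithin).exists.imp
      (fun δ h => ⟨h.1.1, h.1.2, h.2⟩)
  -- good and bad sets for φ
  set Good : Set ℝ := (fun s => φ s x) ⁻¹' Metric.closedBall p δ₁ with hGooddef
  have hGoodclosed : IsClosed Good := Metric.isClosed_closedBall.preimage hφx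
  set B : Set ℝ := Goodᶜ with hBdef
  have hBopen : IsOpen B := hGoodclosed.isOpen_compl
  have hφdensEv : ∀ᶠ t in Filter.atTop,
      volume (B ∩ Set.Ioc 0 t) ≤ ENNReal.ofReal (ε * t) := by
    have hbφ : Filter.IsBoundedUnder (· ≥ ·) Filter.atTop
        (fun t : ℝ => (1 / t) *
          ∫ s in (0 : ℝ)..t, (Metric.ball p δ).indicator (fun _ => (1 : ℝ)) (φ s x)) := by
      refine ⟨0, ?_⟩
      rw [Filter.eventually_map]
      filter_upwards [Filter.eventually_ge_atTop 1] with t ht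
      rw [density_eq_measure hφx Metric.isOpen_ball (by linarith : (0:ℝ) ≤ t)]
      have h1t : (0:ℝ) ≤ 1/t := by positivity
      positivity
    filter_upwards [Filter.eventually_lt_of_lt_liminf hδlim hbφ,
      Filter.eventually_ge_atTop 1] with t h4 h5
    have ht0 : (0:ℝ) < t := by linarith
    rw [density_eq_measure hφx Metric.isOpen_ball ht0.le] at h4
    have hSsub : (fun s => φ s x) ⁻¹' Metric.ball p δ ∩ Set.Ioc 0 t
        ⊆ Good ∩ Set.Ioc 0 t := by
      refine Set.inter_subset_inter_left _ ?_
      intro s hs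
      exact Metric.ball_subset_closedBall.trans
        (Metric.closedBall_subset_closedBall hδlt.le) hs
    have hGfin : volume (Good ∩ Set.Ioc 0 t) ≠ ⊤ := by
      refine (lt_of_le_of_lt (measure_mono inter_subset_right) ?_).ne
      rw [Real.volume_Ioc]
      exact ENNReal.ofReal_lt_top
    have hgm : ENNReal.ofReal ((1 - ε) * t) ≤ volume (Good ∩ Set.Ioc 0 t) := by
      refine ENNReal.ofReal_le_of_le_toReal ?_
      have hm := ENNReal.toReal_mono hGfin (measure_mono hSsub)
      rw [one_div, inv_mul_eq_div, lt_div_iff₀ ht0] at h4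
      linarith
    have hsplit : volume (Good ∩ Set.Ioc 0 t) + volume (B ∩ Set.Ioc 0 t)
        = ENNReal.ofReal t := by
      have hdisj : Disjoint (Good ∩ Set.Ioc 0 t) (B ∩ Set.Ioc 0 t) := by
        rw [Set.disjoint_left]
        rintro s ⟨h1, -⟩ ⟨h2, -⟩
        exact h2 h1
      have hun : (Good ∩ Set.Ioc 0 t) ∪ (B ∩ Set.Ioc 0 t) = Set.Ioc 0 t := by
        rw [← Set.union_inter_distrib_right, Set.union_compl_self, Set.univ_inter]
      calc volume (Good ∩ Set.Ioc 0 t) + volume (B ∩ Set.Ioc 0 t)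
          = volume ((Good ∩ Set.Ioc 0 t) ∪ (B ∩ Set.Ioc 0 t)) :=
            (measure_union hdisj (hBopen.measurableSet.inter measurableSet_Ioc)).symm
        _ = ENNReal.ofReal t := by rw [hun, Real.volume_Ioc, sub_zero]
    have h6 : volume (B ∩ Set.Ioc 0 t) ≤ ENNReal.ofReal t - ENNReal.ofReal ((1 - ε) * t) := by
      refine ENNReal.le_sub_of_add_le_right (by simp) ?_
      calc volume (B ∩ Set.Ioc 0 t) + ENNReal.ofReal ((1 - ε) * t)
          ≤ volume (B ∩ Set.Ioc 0 t) + volume (Good ∩ Set.Ioc 0 t) := by gcongr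
        _ = ENNReal.ofReal t := by rw [add_comm]; exact hsplit
    refine h6.trans ?_
    rw [← ENNReal.ofReal_sub _ (by nlinarith : (0:ℝ) ≤ (1 - ε) * t)]
    refine ENNReal.ofReal_le_ofReal ?_
    nlinarith
  -- pick t₀
  obtain ⟨t₀', ht₀'⟩ := Filter.eventually_atTop.mp
    (hφdensEv.and (hgrow.and (Filter.eventually_ge_atTop 1)))
  set t₀ : ℝ := max t₀' 1 with ht₀def
  have ht₀1 : (1:ℝ) ≤ t₀ := le_max_right _ _
  have ht₀prop : ∀ t : ℝ, t₀ ≤ t →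
      volume (B ∩ Set.Ioc 0 t) ≤ ENNReal.ofReal (ε * t) ∧ t / 2 ≤ τ t ∧ 1 ≤ t :=
    fun t ht => ht₀' t (le_trans (le_max_left _ _) ht)
  -- first good time v₀
  have hGne : (Good ∩ Set.Icc 0 t₀).Nonempty := by
    by_contra hne
    rw [Set.not_nonempty_iff_eq_empty] at hne
    have h1 := (ht₀prop t₀ le_rfl).1
    have h2 : B ∩ Set.Ioc 0 t₀ = Set.Ioc 0 t₀ := by
      ext s
      refine ⟨fun h => h.2, fun h => ⟨?_, h⟩⟩
      intro hsG
      have : s ∈ Good ∩ Set.Icc 0 t₀ := ⟨hsG, h.1.le, h.2⟩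
      rw [hne] at this
      exact this
    rw [h2, Real.volume_Ioc, sub_zero] at h1
    rw [ENNReal.ofReal_le_ofReal_iff (by positivity)] at h1
    nlinarith
  set v₀ : ℝ := sInf (Good ∩ Set.Icc 0 t₀) with hv₀def
  have hv₀mem : v₀ ∈ Good ∩ Set.Icc 0 t₀ :=
    (isCompact_Icc.inter_left hGoodclosed).sInf_mem hGne
  have hτv₀0 : 0 ≤ τ v₀ := by
    rw [← hτ0]
    exact hτmono.monotone hv₀mem.2.1
  -- the eventual estimate
  filter_upwards [Filter.eventually_ge_atTop (max (τ t₀) 1),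
    Filter.eventually_ge_atTop (4 * τ v₀ / ε' + 1)] with T hT1 hT2
  have hT0 : (0:ℝ) < T := lt_of_lt_of_le (lt_of_lt_of_le one_pos (le_max_right _ _)) hT1
  obtain ⟨t, ht0, hτt⟩ := hsurj T hT0.le
  have htt₀ : t₀ ≤ t := by
    by_contra hlt
    push_neg at hlt
    have h := hτmono hlt
    rw [hτt] at h
    have : τ t₀ ≤ T := le_trans (le_max_left _ _) hT1
    linarith
  obtain ⟨hvolB, hgrt, ht1⟩ := ht₀prop t htt₀
  have htle : t ≤ 2 * T := by rw [← hτt]; linarith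
  -- gap starting points
  set P : ℝ → ℝ → Prop := fun a v => v ∈ Set.Ioc 0 t ∧ φ v x ∉ Metric.ball p δ₂ ∧
    (Good ∩ Set.Icc 0 v).Nonempty ∧ a = sSup (Good ∩ Set.Icc 0 v) with hPdef
  set A : Set ℝ := {a | ∃ v, P a v} with hAdef
  have hwitle : ∀ a v, P a v → v ≤ t := fun a v h => h.1.2
  have hPfacts : ∀ a v, P a v → a ∈ Good ∧ 0 ≤ a ∧ a + h₀ < v ∧
      (∀ w, a < w → w ≤ v → w ∈ B) ∧ τ v ≤ τ a + 2 * (v - a) / h₀ := by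
    rintro a v ⟨hvI, hvbad, hne, ha⟩
    have hcpt : IsCompact (Good ∩ Set.Icc 0 v) := isCompact_Icc.inter_left hGoodclosed
    have hamem : a ∈ Good ∩ Set.Icc 0 v := ha ▸ hcpt.sSup_mem hne
    have haGood : a ∈ Good := hamem.1
    have ha0 : 0 ≤ a := hamem.2.1
    have hav' : a ≤ v := hamem.2.2
    have hav : a < v := by
      rcases eq_or_lt_of_le hav' with h | h
      · exfalso
        refine hvbad ?_
        rw [← h]
        exact Metric.mem_ball.mpr (lt_of_le_of_lt (Metric.mem_closedBall.mp haGood) hδ₁₂)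
      · exact h
    have hbet : ∀ w, a < w → w ≤ v → w ∈ B := by
      intro w hw1 hw2
      by_contra hwB
      rw [hBdef, Set.mem_compl_iff, not_not] at hwB
      have hwmem : w ∈ Good ∩ Set.Icc 0 v := ⟨hwB, by linarith, hw2⟩
      have hle := le_csSup hcpt.bddAbove hwmem
      rw [← ha] at hle
      linarith
    have h2lt : 2 < τ v - τ a := by
      by_contra hle
      push_neg at hle
      have hr0 : 0 ≤ τ v - τ a := by
        have := hτmono.monotone hav'
        linarith
      have hball := hδ₁ball (φ a x) haGood (τ v - τ a) ⟨hr0, hle⟩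
      have heq : ψ (τ v - τ a) (φ a x) = φ v x := by
        calc ψ (τ v - τ a) (φ a x) = ψ (τ v - τ a) (ψ (τ a) x) := by rw [htransfer a]
          _ = ψ (τ a + (τ v - τ a)) x := hψadd _ _ _
          _ = ψ (τ v) x := by congr 1; ring
          _ = φ v x := htransfer v
      rw [heq] at hball
      exact hvbad hball
    have hch : τ v - τ a ≤ (v - a) / h₀ + 1 := by
      refine chunk a v hav ?_
      intro w hw1 hw2
      have hwB := hbet w hw1 hw2
      rw [hBdef, Set.mem_compl_iff] at hwB
      have hlt : ¬ dist (φ w x) p ≤ δ₁ := hwB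
      linarith [not_le.mp hlt]
    have hgap : 1 < (v - a) / h₀ := by linarith
    have hgap' : h₀ < v - a := by
      rw [lt_div_iff₀ hh₀pos] at hgap
      linarith
    refine ⟨haGood, ha0, by linarith, hbet, ?_⟩
    have h2d : 2 * (v - a) / h₀ = (v - a) / h₀ + (v - a) / h₀ := by ring
    linarith
  set e : ℝ → ℝ := fun a => sSup {v | P a v} with hedef
  have heA : ∀ a ∈ A, a + h₀ ≤ e a ∧ e a ≤ t ∧ Set.Ioo a (e a) ⊆ B ∩ Set.Ioc 0 t ∧
      ∀ v, P a v → v ≤ e a := by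
    rintro a ⟨v, hv⟩
    have hbddw : BddAbove {v | P a v} := ⟨t, fun v' hv' => hwitle a v' hv'⟩
    have hnew : Set.Nonempty {v | P a v} := ⟨v, hv⟩
    have hle : ∀ v', P a v' → v' ≤ e a := fun v' hv' => le_csSup hbddw hv'
    have hf := hPfacts a v hv
    have h1 : a + h₀ ≤ e a := le_trans hf.2.2.1.le (hle v hv)
    have h2 : e a ≤ t := csSup_le hnew fun v' hv' => hwitle a v' hv'
    refine ⟨h1, h2, ?_, hle⟩
    intro w hw
    obtain ⟨v', hv', hwv'⟩ := exists_lt_of_lt_csSup hnew hw.2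
    have hf' := hPfacts a v' hv'
    exact ⟨hf'.2.2.2.1 w hw.1 hwv'.le,
      lt_of_le_of_lt hf'.2.1 hw.1, le_trans hwv'.le (hwitle a v' hv')⟩
  have hsepA : ∀ a ∈ A, ∀ b ∈ A, a < b → e a ≤ b := by
    rintro a ⟨v, hv⟩ b ⟨v', hv'⟩ hab
    refine csSup_le ⟨v, hv⟩ ?_
    intro v'' hv''
    by_contra hgt
    push_neg at hgt
    have hbG : b ∈ Good := (hPfacts b v' hv').1
    have hb0 : 0 ≤ b := (hPfacts b v' hv').2.1
    obtain ⟨hv''I, hv''bad, hv''ne, hv''eq⟩ := hv''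
    have hbmem : b ∈ Good ∩ Set.Icc 0 v'' := ⟨hbG, hb0, hgt.le⟩
    have hble := le_csSup (isCompact_Icc.inter_left hGoodclosed).bddAbove hbmem
    rw [← hv''eq] at hble
    linarith
  have hAsub : A ⊆ Set.Icc 0 t := by
    rintro a ⟨v, hv⟩
    have hf := hPfacts a v hv
    exact ⟨hf.2.1, le_trans (by linarith [hf.2.2.1, hh₀pos]) (hwitle a v hv)⟩
  have hAfin : A.Finite := by
    refine finite_of_separated hh₀pos hAsub ?_
    intro a ha b hb hab
    exact le_trans (heA a ha).1 (hsepA a ha b hb hab)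
  -- the covering
  set Sψ : Set ℝ := (fun s => ψ s x) ⁻¹' Metric.ball p δ₂ with hSψdef
  have hcover : Sψᶜ ∩ Set.Ioc 0 T ⊆
      Set.Ioc 0 (τ v₀) ∪ ⋃ a ∈ A, Set.Ioc (τ a) (τ a + 2 * (e a - a) / h₀) := by
    rintro s ⟨hsbad, hs0, hsT⟩
    have hsmem : s ∈ Set.Icc (τ 0) (τ t) := ⟨by rw [hτ0]; exact hs0.le, by rw [hτt]; exact hsT⟩
    obtain ⟨v, hvI, hτv⟩ := intermediate_value_Icc ht0 hτc.continuousOn hsmem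
    have hv0 : 0 < v := by
      rcases eq_or_lt_of_le hvI.1 with h | h
      · exfalso
        rw [← h, hτ0] at hτv
        exact absurd hτv.symm (ne_of_gt hs0)
      · exact h
    have hvbad : φ v x ∉ Metric.ball p δ₂ := by
      rw [← htransfer v, hτv]
      exact hsbad
    by_cases hne : (Good ∩ Set.Icc 0 v).Nonempty
    · right
      have hPav : P (sSup (Good ∩ Set.Icc 0 v)) v := ⟨⟨hv0, hvI.2⟩, hvbad, hne, rfl⟩
      have haA : sSup (Good ∩ Set.Icc 0 v) ∈ A := ⟨v, hPav⟩
      refine Set.mem_biUnion haA ?_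
      have hf := hPfacts _ v hPav
      have h4 := (heA _ haA).2.2.2 v hPav
      constructor
      · rw [← hτv]
        exact hτmono (by linarith [hf.2.2.1, hh₀pos])
      · rw [← hτv]
        refine hf.2.2.2.2.trans ?_
        have h5 : 2 * (v - sSup (Good ∩ Set.Icc 0 v)) / h₀
            ≤ 2 * (e (sSup (Good ∩ Set.Icc 0 v)) - sSup (Good ∩ Set.Icc 0 v)) / h₀ := by
          gcongr
        linarith
    · left
      have hvv₀ : v < v₀ := by
        by_contra hge
        push_neg at hge
        exact hne ⟨v₀, hv₀mem.1, hv₀mem.2.1, hge⟩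
      exact ⟨hs0, by rw [← hτv]; exact (hτmono hvv₀).le⟩
  -- measure of the cover
  have hvolcover : volume (Sψᶜ ∩ Set.Ioc 0 T)
      ≤ ENNReal.ofReal (τ v₀) + ENNReal.ofReal (2 / h₀) * ENNReal.ofReal (ε * t) := by
    have hAco : (⋃ a ∈ A, Set.Ioc (τ a) (τ a + 2 * (e a - a) / h₀))
        = ⋃ a ∈ hAfin.toFinset, Set.Ioc (τ a) (τ a + 2 * (e a - a) / h₀) := by
      simp [Set.Finite.mem_toFinset]
    have hdisjA : (↑hAfin.toFinset : Set ℝ).PairwiseDisjoint (fun a => Set.Ioo a (e a)) := by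
      intro a ha b hb hab
      have ha' : a ∈ A := hAfin.mem_toFinset.mp (Finset.mem_coe.mp ha)
      have hb' : b ∈ A := hAfin.mem_toFinset.mp (Finset.mem_coe.mp hb)
      rcases lt_or_gt_of_ne hab with h | h
      · have hba := hsepA a ha' b hb' h
        refine Set.disjoint_left.mpr ?_
        rintro w hw1 hw2
        linarith [hw1.2, hw2.1]
      · have hba := hsepA b hb' a ha' h
        refine Set.disjoint_left.mpr ?_
        rintro w hw1 hw2
        linarith [hw1.1, hw2.2]
    have hsum2 : ∑ a ∈ hAfin.toFinset, ENNReal.ofReal (e a - a) ≤ ENNReal.ofReal (ε * t) := by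
      have h3 : ∀ a ∈ hAfin.toFinset, ENNReal.ofReal (e a - a) = volume (Set.Ioo a (e a)) := by
        intro a ha
        rw [Real.volume_Ioo]
      rw [Finset.sum_congr rfl h3,
        ← measure_biUnion_finset hdisjA (fun a _ => measurableSet_Ioo)]
      refine le_trans (measure_mono ?_) hvolB
      intro w hw
      simp only [Set.mem_iUnion, exists_prop] at hw
      obtain ⟨a, ha, hw⟩ := hw
      exact (heA a (hAfin.mem_toFinset.mp ha)).2.2.1 hw
    calc volume (Sψᶜ ∩ Set.Ioc 0 T)
        ≤ volume (Set.Ioc 0 (τ v₀) ∪ ⋃ a ∈ A, Set.Ioc (τ a) (τ a + 2 * (e a - a) / h₀)) :=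
          measure_mono hcover
      _ ≤ volume (Set.Ioc 0 (τ v₀))
          + volume (⋃ a ∈ A, Set.Ioc (τ a) (τ a + 2 * (e a - a) / h₀)) :=
          measure_union_le _ _
      _ ≤ ENNReal.ofReal (τ v₀) + ENNReal.ofReal (2 / h₀) * ENNReal.ofReal (ε * t) := by
          refine add_le_add ?_ ?_
          · rw [Real.volume_Ioc, sub_zero]
          · rw [hAco]
            refine le_trans (measure_biUnion_finset_le _ _) ?_
            have h1 : ∀ a ∈ hAfin.toFinset,
                volume (Set.Ioc (τ a) (τ a + 2 * (e a - a) / h₀))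
                  = ENNReal.ofReal (2 / h₀) * ENNReal.ofReal (e a - a) := by
              intro a ha
              rw [Real.volume_Ioc, add_sub_cancel_left,
                show 2 * (e a - a) / h₀ = (2 / h₀) * (e a - a) by ring,
                ENNReal.ofReal_mul (by positivity)]
            rw [Finset.sum_congr rfl h1, ← Finset.mul_sum]
            exact mul_le_mul_right hsum2 _
  -- turn it into the density bound
  have hTsplit : ENNReal.ofReal T ≤ volume (Sψ ∩ Set.Ioc 0 T)
      + (ENNReal.ofReal (τ v₀) + ENNReal.ofReal (2 / h₀) * ENNReal.ofReal (ε * t)) := by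
    have hIoc : Set.Ioc 0 T ⊆ (Sψ ∩ Set.Ioc 0 T) ∪ (Sψᶜ ∩ Set.Ioc 0 T) := by
      intro s hs
      by_cases h : s ∈ Sψ
      · exact Or.inl ⟨h, hs⟩
      · exact Or.inr ⟨h, hs⟩
    calc ENNReal.ofReal T = volume (Set.Ioc 0 T) := by rw [Real.volume_Ioc, sub_zero]
      _ ≤ volume ((Sψ ∩ Set.Ioc 0 T) ∪ (Sψᶜ ∩ Set.Ioc 0 T)) := measure_mono hIoc
      _ ≤ volume (Sψ ∩ Set.Ioc 0 T) + volume (Sψᶜ ∩ Set.Ioc 0 T) := measure_union_le _ _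
      _ ≤ _ := add_le_add_right hvolcover _
  have hfinSψ : volume (Sψ ∩ Set.Ioc 0 T) ≠ ⊤ := by
    refine (lt_of_le_of_lt (measure_mono inter_subset_right) ?_).ne
    rw [Real.volume_Ioc]
    exact ENNReal.ofReal_lt_top
  have hεt0 : (0:ℝ) ≤ (2 / h₀) * (ε * t) :=
    mul_nonneg (by positivity) (mul_nonneg hεpos.le ht0)
  have hXlb : T - (τ v₀ + (2 / h₀) * (ε * t)) ≤ (volume (Sψ ∩ Set.Ioc 0 T)).toReal := by
    have h1 : ENNReal.ofReal (τ v₀) + ENNReal.ofReal (2 / h₀) * ENNReal.ofReal (ε * t)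
        = ENNReal.ofReal (τ v₀ + (2 / h₀) * (ε * t)) := by
      rw [← ENNReal.ofReal_mul (by positivity),
        ← ENNReal.ofReal_add hτv₀0 hεt0]
    rw [h1] at hTsplit
    have hfin2 : volume (Sψ ∩ Set.Ioc 0 T)
        + ENNReal.ofReal (τ v₀ + (2 / h₀) * (ε * t)) ≠ ⊤ :=
      ENNReal.add_ne_top.mpr ⟨hfinSψ, ENNReal.ofReal_ne_top⟩
    have h2 := ENNReal.toReal_mono hfin2 hTsplit
    rw [ENNReal.toReal_add hfinSψ ENNReal.ofReal_ne_top, ENNReal.toReal_ofReal hT0.le,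
      ENNReal.toReal_ofReal (add_nonneg hτv₀0 hεt0)] at h2
    linarith
  rw [hudens T hT0.le]
  rw [one_div, inv_mul_eq_div, le_div_iff₀ hT0]
  have hb1 : τ v₀ ≤ ε' * T / 4 := by
    have h1 : 4 * τ v₀ / ε' ≤ T := by linarith
    rw [div_le_iff₀ hε'] at h1
    linarith
  have hb2 : (2 / h₀) * (ε * t) ≤ ε' * T / 2 := by
    have h1 : ε * t ≤ (h₀ * ε' / 8) * (2 * T) :=
      mul_le_mul hε8 htle ht0 (by positivity)
    calc (2 / h₀) * (ε * t) ≤ (2 / h₀) * ((h₀ * ε' / 8) * (2 * T)) :=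
          mul_le_mul_of_nonneg_left h1 (by positivity)
      _ = ε' * T / 2 := by field_simp; ring
  have hεT : 0 < ε' * T := mul_pos hε' hT0
  linarith [hXlb]
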